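/- In a probability-theoretic model: let R be uniform on Fin 101 (values 0 to 100), and conditional on R = r draw an ordered pair of distinct balls from 100 balls of which r are red, uniformly. Then the conditional probability that the second ball is red given the first ball is red equals 2/3. -/

import Mathlib

section Aux
open Finset

abbrev T := Fin 101 × Fin 100 × Fin 100

set_option maxRecDepth 10000 in
lemma fin_lt_card : ∀ r : Fin 101, (univ.filter fun i : Fin 100 => (i:ℕ) < (r:ℕ)).card = (r:ℕ) := by decide

lemma ne_card (i : Fin 100) : (univ.filter fun j : Fin 100 => i ≠ j).card = 99 := by
  have : (univ.filter fun j : Fin 100 => i ≠ j) = univ.erase i := by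
    ext j; simp [ne_comm, eq_comm]
  rw [this, card_erase_of_mem (mem_univ i)]; rfl

lemma countA : Fintype.card {y : T // y.2.1 ≠ y.2.2 ∧ (y.2.1:ℕ) < (y.1:ℕ)} = 499950 := by
  rw [Fintype.card_subtype, card_filter, Fintype.sum_prod_type]
  have : ∀ r : Fin 101, (∑ y : Fin 100 × Fin 100,
      if (r, y).2.1 ≠ (r, y).2.2 ∧ ((r, y).2.1 : ℕ) < ((r, y).1 : ℕ) then 1 else 0) = 99 * (r:ℕ) := by
    intro r
    rw [Fintype.sum_prod_type]
    have h1 : ∀ i : Fin 100, (∑ j : Fin 100, if i ≠ j ∧ (i:ℕ) < (r:ℕ) then 1 else 0)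
        = if (i:ℕ) < (r:ℕ) then 99 else 0 := by
      intro i
      by_cases h : (i:ℕ) < (r:ℕ)
      · simp only [h, and_true, if_true]
        rw [Finset.sum_boole]
        simp [ne_card i]
      · simp [h]
    simp only [h1]
    rw [← Finset.sum_filter, Finset.sum_const, fin_lt_card r, smul_eq_mul, mul_comm]
  simp only [this]
  decide

lemma countAB : Fintype.card {y : T // y.2.1 ≠ y.2.2 ∧ ((y.2.1:ℕ) < (y.1:ℕ) ∧ (y.2.2:ℕ) < (y.1:ℕ))} = 333300 := by
  rw [Fintype.card_subtype, card_filter, Fintype.sum_prod_type]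
  have : ∀ r : Fin 101, (∑ y : Fin 100 × Fin 100,
      if (r, y).2.1 ≠ (r, y).2.2 ∧ (((r, y).2.1 : ℕ) < ((r, y).1 : ℕ) ∧ ((r, y).2.2 : ℕ) < ((r, y).1 : ℕ)) then 1 else 0)
      = (r:ℕ) * ((r:ℕ) - 1) := by
    intro r
    rw [Fintype.sum_prod_type]
    have h1 : ∀ i : Fin 100, (∑ j : Fin 100, if i ≠ j ∧ ((i:ℕ) < (r:ℕ) ∧ (j:ℕ) < (r:ℕ)) then 1 else 0)
        = if (i:ℕ) < (r:ℕ) then (r:ℕ) - 1 else 0 := by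
      intro i
      by_cases h : (i:ℕ) < (r:ℕ)
      · simp only [h, true_and, if_true]
        rw [Finset.sum_boole]
        have e : (univ.filter fun j : Fin 100 => i ≠ j ∧ (j:ℕ) < (r:ℕ))
            = (univ.filter fun j : Fin 100 => (j:ℕ) < (r:ℕ)).erase i := by
          ext j; simp [mem_erase, eq_comm, and_comm]
        rw [e, card_erase_of_mem (by simp [h]), fin_lt_card r]
        simp
      · simp [h]
    simp only [h1]
    rw [← Finset.sum_filter, Finset.sum_const, fin_lt_card r, smul_eq_mul]
  simp only [this]
  decide

lemma countOmega : Fintype.card {y : T // y.2.1 ≠ y.2.2} = 999900 := by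
  rw [Fintype.card_subtype, card_filter, Fintype.sum_prod_type]
  have : ∀ r : Fin 101, (∑ y : Fin 100 × Fin 100,
      if (r, y).2.1 ≠ (r, y).2.2 then 1 else 0) = 9900 := by
    intro r
    rw [Fintype.sum_prod_type]
    have h1 : ∀ i : Fin 100, (∑ j : Fin 100, if i ≠ j then 1 else 0) = 99 := by
      intro i; rw [Finset.sum_boole]; simp [ne_card i]
    simp only [h1]
    simp
  simp only [this]
  decide

end Aux
open ProbabilityTheory MeasureTheory


set_option maxRecDepth 10000 in
theorem stmt6 :
    haveI : Nonempty {x : Fin 101 × Fin 100 × Fin 100 // x.2.1 ≠ x.2.2} :=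
      ⟨⟨(0, 0, 1), by decide⟩⟩
    ((PMF.uniformOfFintype {x : Fin 101 × Fin 100 × Fin 100 // x.2.1 ≠ x.2.2}).toMeasure)[{x : {x : Fin 101 × Fin 100 × Fin 100 // x.2.1 ≠ x.2.2} | (x.val.2.2 : ℕ) < x.val.1}
        | {x : {x : Fin 101 × Fin 100 × Fin 100 // x.2.1 ≠ x.2.2} | (x.val.2.1 : ℕ) < x.val.1}]
      = 2 / 3 := by
  haveI : Nonempty {x : Fin 101 × Fin 100 × Fin 100 // x.2.1 ≠ x.2.2} :=
    ⟨⟨(0, 0, 1), by decide⟩⟩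
  set Ω := {x : Fin 101 × Fin 100 × Fin 100 // x.2.1 ≠ x.2.2}
  set A : Set Ω := {x | (x.val.2.1 : ℕ) < x.val.1}
  set B : Set Ω := {x | (x.val.2.2 : ℕ) < x.val.1}
  have mA : MeasurableSet A := (Set.toFinite A).measurableSet
  rw [cond_apply mA, PMF.toMeasure_uniformOfFintype_apply A mA,
    PMF.toMeasure_uniformOfFintype_apply (A ∩ B) ((Set.toFinite _).measurableSet)]
  have cA : Nat.card A = 499950 := by
    have e : A ≃ {y : Fin 101 × Fin 100 × Fin 100 // y.2.1 ≠ y.2.2 ∧ (y.2.1:ℕ) < (y.1:ℕ)} :=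
      (Equiv.subtypeEquivRight (p := fun x : Ω => x ∈ A)
          (q := fun x : Ω => (x.val.2.1:ℕ) < (x.val.1:ℕ)) fun x => Iff.rfl).trans
        (Equiv.subtypeSubtypeEquivSubtypeInter
          (fun y : Fin 101 × Fin 100 × Fin 100 => y.2.1 ≠ y.2.2)
          (fun y => (y.2.1:ℕ) < (y.1:ℕ)))
    rw [Nat.card_congr e, Nat.card_eq_fintype_card, countA]
  have cAB : Nat.card ↥(A ∩ B) = 333300 := by
    have e : ↥(A ∩ B) ≃ {y : Fin 101 × Fin 100 × Fin 100 //
        y.2.1 ≠ y.2.2 ∧ ((y.2.1:ℕ) < (y.1:ℕ) ∧ (y.2.2:ℕ) < (y.1:ℕ))} :=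
      (Equiv.subtypeEquivRight (p := fun x : Ω => x ∈ A ∩ B)
          (q := fun x : Ω => (x.val.2.1:ℕ) < (x.val.1:ℕ) ∧ (x.val.2.2:ℕ) < (x.val.1:ℕ))
          fun x => Iff.rfl).trans
        (Equiv.subtypeSubtypeEquivSubtypeInter
          (fun y : Fin 101 × Fin 100 × Fin 100 => y.2.1 ≠ y.2.2)
          (fun y => (y.2.1:ℕ) < (y.1:ℕ) ∧ (y.2.2:ℕ) < (y.1:ℕ)))
    rw [Nat.card_congr e, Nat.card_eq_fintype_card, countAB]
  have cO : Nat.card Ω = 999900 := by rw [Nat.card_eq_fintype_card, countOmega]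
  simp only [← Nat.card_eq_fintype_card, cA, cAB, cO]
  have h1 : ((999900 : ENNReal) / 499950) = 2 :=
    ((ENNReal.eq_div_iff (by norm_num) (by norm_num)).mpr (by norm_num)).symm
  have h2 : ((333300 : ENNReal) / 999900) = 1 / 3 := by
    rw [ENNReal.div_eq_div_iff (by norm_num) (by norm_num) (by norm_num) (by norm_num)]
    norm_num
  rw [ENNReal.inv_div (Or.inr (by norm_num)) (Or.inr (by norm_num))]
  push_cast
  rw [h1, h2, mul_one_div]
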